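/- Stability of the spatiotemporal single-linkage partition maps on objects: let γ_X, γ_Y be DMSs with d_dyn(γ_X, γ_Y) < ε/2, witnessed by an (ε/2)-tripod R with surjections φ_X : Z ↠ X, φ_Y : Z ↠ Y, and let f : X → Y satisfy: for every x there is z ∈ Z with φ_X(z)=x and φ_Y(z)=f(x). For (I,δ) ∈ Int × ℝ≥0 let ∼^X_{I,δ} denote the equivalence relation on X generated by {(x,x') : ⋁_I d_X(x,x') ≤ δ}, and similarly ∼^Y. Then f induces a well-defined surjective map from X/∼^X_{I,δ} to Y/∼^Y_{I^ε, δ+ε}, where I^ε is I widened by ε on both sides. -/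

import Mathlib

namespace Stmt11

noncomputable def vee {X : Type} (d : ℝ → X → X → ℝ) (a b : ℝ) (x x' : X) : ℝ :=
  sInf ((fun s => d s x x') '' Set.Icc a b)

lemma vee_mono {X : Type} (d : ℝ → X → X → ℝ) (hnn : ∀ t x x', 0 ≤ d t x x')
    {a b c e : ℝ} (hca : c ≤ a) (hbe : b ≤ e) (hab : a ≤ b) (x x' : X) :
    vee d c e x x' ≤ vee d a b x x' := by
  apply csInf_le_csInf
  · exact ⟨0, fun r ⟨s, _, hs⟩ => hs ▸ hnn s x x'⟩
  · exact ⟨d a x x', a, Set.mem_Icc.2 ⟨le_refl a, hab⟩, rfl⟩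
  · exact Set.image_mono (Set.Icc_subset_Icc hca hbe)

lemma vee_exists_le {X : Type} (d : ℝ → X → X → ℝ)
    (hcont : ∀ x x', Continuous fun t => d t x x')
    {a b : ℝ} (hab : a ≤ b) (x x' : X) {δ : ℝ} (h : vee d a b x x' ≤ δ) :
    ∃ s ∈ Set.Icc a b, d s x x' ≤ δ := by
  obtain ⟨s, hs, hmin⟩ := isCompact_Icc.exists_isMinOn (Set.nonempty_Icc.2 hab)
    ((hcont x x').continuousOn (s := Set.Icc a b))
  refine ⟨s, hs, le_trans ?_ h⟩
  refine le_csInf ⟨d a x x', a, Set.mem_Icc.2 ⟨le_refl a, hab⟩, rfl⟩ ?_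
  rintro r ⟨t, ht, rfl⟩
  exact hmin ht

/-- given an `(ε/2)`-tripod between DMSs `γ_X, γ_Y` and a map
`f : X → Y` compatible with the tripod, for every `(I,δ) ∈ Int × ℝ≥0` the map
`[x] ↦ [f x]` is a well-defined surjection from `X/∼^X_{I,δ}` onto
`Y/∼^Y_{I^ε, δ+ε}`. -/
theorem spatiotemporal_partition_map_welldefined_surjective
    {X Y Z : Type} [Fintype X] [Nonempty X] [Fintype Y] [Nonempty Y]
    (dX : ℝ → X → X → ℝ) (dY : ℝ → Y → Y → ℝ)
    (hXnn : ∀ t x x', 0 ≤ dX t x x') (hXrefl : ∀ t x, dX t x x = 0)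
    (hXsymm : ∀ t x x', dX t x x' = dX t x' x)
    (hXtri : ∀ t x x' x'', dX t x x'' ≤ dX t x x' + dX t x' x'')
    (hXcont : ∀ x x', Continuous fun t => dX t x x')
    (hYnn : ∀ t y y', 0 ≤ dY t y y') (hYrefl : ∀ t y, dY t y y = 0)
    (hYsymm : ∀ t y y', dY t y y' = dY t y' y)
    (hYtri : ∀ t y y' y'', dY t y y'' ≤ dY t y y' + dY t y' y'')
    (hYcont : ∀ y y', Continuous fun t => dY t y y')
    (ε : ℝ) (hε : 0 ≤ ε)
    (pX : Z → X) (pY : Z → Y)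
    (hpX : Function.Surjective pX) (hpY : Function.Surjective pY)
    (htripod : ∀ t : ℝ, ∀ z z' : Z,
      vee dX (t - ε / 2) (t + ε / 2) (pX z) (pX z') ≤ dY t (pY z) (pY z') + ε ∧
      vee dY (t - ε / 2) (t + ε / 2) (pY z) (pY z') ≤ dX t (pX z) (pX z') + ε)
    (f : X → Y) (hf : ∀ x : X, ∃ z : Z, pX z = x ∧ pY z = f x)
    (u u' : ℝ) (huu' : u ≤ u') (δ : ℝ) (hδ : 0 ≤ δ) :
    ∃ F : Quot (fun x x' : X => vee dX u u' x x' ≤ δ) →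
          Quot (fun y y' : Y => vee dY (u - ε) (u' + ε) y y' ≤ δ + ε),
      (∀ x : X, F (Quot.mk _ x) = Quot.mk _ (f x)) ∧ Function.Surjective F := by
  -- key estimate: relation is preserved
  have key : ∀ x x' : X, vee dX u u' x x' ≤ δ →
      vee dY (u - ε) (u' + ε) (f x) (f x') ≤ δ + ε := by
    intro x x' hxx
    obtain ⟨s, hs, hsle⟩ := vee_exists_le dX hXcont huu' x x' hxx
    obtain ⟨z, hzX, hzY⟩ := hf x
    obtain ⟨z', hzX', hzY'⟩ := hf x'
    have htri := (htripod s z z').2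
    rw [hzX, hzX', hzY, hzY'] at htri
    have hmono : vee dY (u - ε) (u' + ε) (f x) (f x') ≤
        vee dY (s - ε / 2) (s + ε / 2) (f x) (f x') :=
      vee_mono dY hYnn (by linarith [hs.1]) (by linarith [hs.2]) (by linarith) _ _
    linarith
  refine ⟨Quot.lift (fun x => Quot.mk _ (f x))
    (fun x x' h => Quot.sound (key x x' h)), fun x => rfl, ?_⟩
  intro q
  obtain ⟨y, rfl⟩ := Quot.exists_rep q
  obtain ⟨z, hz⟩ := hpY y
  obtain ⟨z', hzX', hzY'⟩ := hf (pX z)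
  refine ⟨Quot.mk _ (pX z), ?_⟩
  simp only
  apply Quot.sound
  have htri := (htripod u z' z).2
  rw [hzX', hzY', hz, hXrefl] at htri
  have hmono : vee dY (u - ε) (u' + ε) (f (pX z)) y ≤
      vee dY (u - ε / 2) (u + ε / 2) (f (pX z)) y :=
    vee_mono dY hYnn (by linarith) (by linarith) (by linarith) _ _
  linarith

end Stmt11
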